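/- Let E be a module with a bilinear bracket [·,·] and let I, J : E → E be anti-commuting linear maps. Then for all X, Y in E: the torsion of J with respect to the bracket deformed by I satisfies T_{[·,·]_I}(J)(X,Y) = -J(C(X,Y)) - T(J)(IX,Y) - T(J)(X,IY) - I(T(J)(X,Y)), where C(X,Y) = [X,Y]_{I,J} + [X,Y]_{J,I} is the concomitant. -/

import Mathlib

variable {R : Type*} [CommRing R] {E : Type*} [AddCommGroup E] [Module R E]

/-- The underlying binary operation of a bilinear bracket. -/
def br2 (b : E →ₗ[R] E →ₗ[R] E) : E → E → E := fun x y => b x y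

/-- Deformation of a bracket `b` by an endomorphism `I`:
`[X,Y]_I = [IX,Y] + [X,IY] - I [X,Y]`. -/
def deform (I : Module.End R E) (b : E → E → E) : E → E → E :=
  fun X Y => b (I X) Y + b X (I Y) - I (b X Y)

/-- Nijenhuis torsion of `I` with respect to the bracket `b`. -/
def torsion (I : Module.End R E) (b : E → E → E) : E → E → E :=
  fun X Y => b (I X) (I Y) - I (deform I b X Y)


/-- Concomitant `C(I,J)(X,Y) = [X,Y]_{I,J} + [X,Y]_{J,I}`. -/
def conc (I J : Module.End R E) (b : E → E → E) : E → E → E :=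
  fun X Y => deform J (deform I b) X Y + deform I (deform J b) X Y

theorem stmt11 (b : E →ₗ[R] E →ₗ[R] E) (I J : Module.End R E)
    (hanti : I * J = -(J * I)) (X Y : E) :
    torsion J (deform I (br2 b)) X Y
      = -J (conc I J (br2 b) X Y)
        - torsion J (br2 b) (I X) Y - torsion J (br2 b) X (I Y)
        - I (torsion J (br2 b) X Y) := by
  have h : ∀ x : E, J (I x) = - I (J x) := fun x => by
    have := congrArg (fun f : Module.End R E => f x) hanti
    simp [Module.End.mul_apply] at this
    simp [this]
  simp only [torsion, deform, conc, br2, map_add, map_sub, map_neg, LinearMap.neg_apply, LinearMap.smul_apply, h]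
  abel
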